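/- Let H be a (d+1)-partite hypergraph on pairwise disjoint n-element vertex classes P_1, ..., P_{d+1}, and let 0 < ε < 1/2 with ε·s an integer. Suppose S_i ⊆ P_i are subsets of equal size s = |S_1| = ... = |S_{d+1}| that maximize the quantity e(S_1, ..., S_{d+1}) / s^{d+1−ε^{2d}} over all choices of equal-size subsets of the P_i. Then for every ε·s-element subset Q_1 ⊆ S_1, one has e(S_1∖Q_1, S_2, ..., S_{d+1}) ≤ e(S_1, ..., S_{d+1}) · (1−ε)^{1−ε^{2d}}. -/

import Mathlib

/-- For a `(d+1)`-partite hypergraph, given as a finite set `H` of edges where an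
edge is recorded by the function selecting its vertex in each class,
`edgeCount H S` is the number `e(S 0, …, S d)` of edges of `H` whose vertex in the
`i`-th class belongs to `S i` for every `i`. -/
def edgeCount {V : Type*} [DecidableEq V] {d : ℕ} (H : Finset (Fin (d + 1) → V))
    (S : Fin (d + 1) → Finset V) : ℕ :=
  (H.filter fun e => ∀ i, e i ∈ S i).card

section Aux

variable {V : Type*} [DecidableEq V] {d : ℕ}

lemma edgeCount_filter (H : Finset (Fin (d + 1) → V)) (T : Fin (d + 1) → Finset V)
    (i : Fin (d + 1)) (Q : Finset V) :
    edgeCount H (Function.update T i (T i \ Q)) =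
      ((H.filter fun e => ∀ j, e j ∈ T j).filter fun e => e i ∉ Q).card := by
  rw [edgeCount, Finset.filter_filter]
  congr 1
  ext e
  simp only [Finset.mem_filter, and_congr_right_iff]
  intro _
  constructor
  · intro h
    have hi := h i
    rw [Function.update_self, Finset.mem_sdiff] at hi
    refine ⟨fun j => ?_, hi.2⟩
    rcases eq_or_ne j i with rfl | hj
    · exact hi.1
    · simpa [Function.update_of_ne hj] using h j
  · rintro ⟨h1, h2⟩ j
    rcases eq_or_ne j i with rfl | hj
    · rw [Function.update_self, Finset.mem_sdiff]; exact ⟨h1 j, h2⟩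
    · rw [Function.update_of_ne hj]; exact h1 j

lemma sum_edgeCount (H : Finset (Fin (d + 1) → V)) (T : Fin (d + 1) → Finset V)
    (i : Fin (d + 1)) (m : ℕ) :
    ∑ Q ∈ (T i).powersetCard m, edgeCount H (Function.update T i (T i \ Q)) =
      edgeCount H T * ((T i).card - 1).choose m := by
  simp_rw [edgeCount_filter, Finset.card_filter]
  rw [Finset.sum_comm]
  rw [Finset.sum_congr rfl (fun e he => ?_), Finset.sum_const, smul_eq_mul, edgeCount]
  have hei : e i ∈ T i := (Finset.mem_filter.mp he).2 i
  rw [← Finset.card_filter]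
  have hset : ((T i).powersetCard m).filter (fun Q => e i ∉ Q) =
      ((T i).erase (e i)).powersetCard m := by
    ext Q
    simp only [Finset.mem_filter, Finset.mem_powersetCard, Finset.subset_erase]
    tauto
  rw [hset, Finset.card_powersetCard, Finset.card_erase_of_mem hei]

lemma exists_shrink (H : Finset (Fin (d + 1) → V)) (T : Fin (d + 1) → Finset V)
    (i : Fin (d + 1)) {s m : ℕ} (hs : (T i).card = s) (hms : m < s) :
    ∃ Q ⊆ T i, Q.card = m ∧
      edgeCount H T * (s - m) ≤ edgeCount H (Function.update T i (T i \ Q)) * s := by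
  have hchoose : s * (s - 1).choose m = (s - m) * s.choose m := by
    obtain ⟨t, rfl⟩ : ∃ t, s = t + 1 := ⟨s - 1, by omega⟩
    have hmt : m ≤ t := by omega
    have h1 : (t + 1) - 1 = t := by omega
    rw [h1, ← Nat.choose_symm hmt, Nat.add_one_mul_choose_eq]
    have h2 : t - m + 1 = t + 1 - m := by omega
    rw [h2, Nat.choose_symm (by omega : m ≤ t + 1)]
    ring
  have hsum := sum_edgeCount H T i m
  rw [hs] at hsum
  have hne : ((T i).powersetCard m).Nonempty := by
    rw [Finset.powersetCard_nonempty]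
    omega
  have hle : ∑ Q ∈ (T i).powersetCard m, edgeCount H T * (s - m) ≤
      ∑ Q ∈ (T i).powersetCard m, edgeCount H (Function.update T i (T i \ Q)) * s := by
    rw [Finset.sum_const, smul_eq_mul, ← Finset.sum_mul, hsum, Finset.card_powersetCard, hs]
    have heq : s.choose m * (edgeCount H T * (s - m)) = edgeCount H T * (s - 1).choose m * s := by
      calc s.choose m * (edgeCount H T * (s - m)) = edgeCount H T * ((s - m) * s.choose m) := by
            ring
        _ = edgeCount H T * (s * (s - 1).choose m) := by rw [hchoose]
        _ = edgeCount H T * (s - 1).choose m * s := by ring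
    exact heq.le
  obtain ⟨Q, hQ, hQle⟩ := Finset.exists_le_of_sum_le hne hle
  rw [Finset.mem_powersetCard] at hQ
  exact ⟨Q, hQ.1, hQ.2, hQle⟩

end Aux

/-- If `0 < ε < 1/2`, `ε * s` is an integer, and the equal-size subsets `S i ⊆ P i`
of size `s` maximize `e(S 0, …, S d) / s^(d+1-ε^(2d))` over all choices of
equal-size subsets of the classes, then for every `ε * s`-element subset
`Q₁ ⊆ S 0` we have
`e(S 0 \ Q₁, S 1, …, S d) ≤ e(S 0, …, S d) * (1-ε)^(1-ε^(2d))`. -/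
theorem maximizing_subsets_removal_bound {V : Type*} [DecidableEq V] (d n : ℕ)
    (P : Fin (d + 1) → Finset V)
    (hdisj : Pairwise (fun i j => Disjoint (P i) (P j)))
    (hcard : ∀ i, (P i).card = n)
    (H : Finset (Fin (d + 1) → V)) (hH : ∀ e ∈ H, ∀ i, e i ∈ P i)
    (ε : ℝ) (hε0 : 0 < ε) (hε1 : ε < 1 / 2)
    (s : ℕ)
    (S : Fin (d + 1) → Finset V) (hS : ∀ i, S i ⊆ P i) (hcardS : ∀ i, (S i).card = s)
    (hmax : ∀ (s' : ℕ) (S' : Fin (d + 1) → Finset V),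
      (∀ i, S' i ⊆ P i) → (∀ i, (S' i).card = s') →
        (edgeCount H S' : ℝ) / (s' : ℝ) ^ ((d : ℝ) + 1 - ε ^ (2 * d)) ≤
          (edgeCount H S : ℝ) / (s : ℝ) ^ ((d : ℝ) + 1 - ε ^ (2 * d)))
    (m : ℕ) (hm : (m : ℝ) = ε * (s : ℝ))
    (Q₁ : Finset V) (hQ₁ : Q₁ ⊆ S 0) (hQ₁card : Q₁.card = m) :
    (edgeCount H (Function.update S 0 (S 0 \ Q₁)) : ℝ) ≤
      (edgeCount H S : ℝ) * (1 - ε) ^ ((1 : ℝ) - ε ^ (2 * d)) := by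
  classical
  have hε1' : ε < 1 := by linarith
  have hr : (0 : ℝ) < 1 - ε := by linarith
  rcases Nat.eq_zero_or_pos s with hs0 | hs
  · -- trivial case s = 0
    have hm0 : m = 0 := by
      have : (m : ℝ) = 0 := by rw [hm, hs0]; simp
      exact_mod_cast this
    have hQ : Q₁ = ∅ := Finset.card_eq_zero.mp (by rw [hQ₁card, hm0])
    have hS0 : S 0 = ∅ := Finset.card_eq_zero.mp (by rw [hcardS]; exact hs0)
    have hupd : Function.update S 0 (S 0 \ Q₁) = S := by
      rw [hQ, Finset.sdiff_empty, Function.update_eq_self]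
    rw [hupd]
    have he0 : edgeCount H S = 0 := by
      rw [edgeCount, Finset.card_eq_zero, Finset.filter_eq_empty_iff]
      intro e _ hp
      have := hp 0
      rw [hS0] at this
      simp at this
    rw [he0]
    simp
  -- main case
  have hsR : (0 : ℝ) < s := by exact_mod_cast hs
  have hms : m < s := by
    have : (m : ℝ) < s := by rw [hm]; nlinarith
    exact_mod_cast this
  have hsm : ((s - m : ℕ) : ℝ) = (1 - ε) * s := by
    rw [Nat.cast_sub hms.le, hm]; ring
  set b := edgeCount H (Function.update S 0 (S 0 \ Q₁)) with hb
  have main : ∀ k, k ≤ d → ∃ T : Fin (d + 1) → Finset V,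
      (∀ j, T j ⊆ S j) ∧ T 0 = S 0 \ Q₁ ∧
      (∀ j : Fin (d + 1), 1 ≤ (j : ℕ) → (j : ℕ) ≤ k → (T j).card = s - m) ∧
      (∀ j : Fin (d + 1), k < (j : ℕ) → T j = S j) ∧
      b * (s - m) ^ k ≤ edgeCount H T * s ^ k := by
    intro k
    induction k with
    | zero =>
      intro _
      refine ⟨Function.update S 0 (S 0 \ Q₁), ?_, ?_, ?_, ?_, ?_⟩
      · intro j
        rcases eq_or_ne j 0 with rfl | hj
        · rw [Function.update_self]; exact Finset.sdiff_subset
        · rw [Function.update_of_ne hj]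
      · rw [Function.update_self]
      · intro j h1 h2; omega
      · intro j hj
        have hj0 : j ≠ 0 := by
          intro h; subst h; simp at hj
        rw [Function.update_of_ne hj0]
      · simp [hb]
    | succ k ih =>
      intro hk
      obtain ⟨T, hTsub, hT0, hcard1, hcard2, hineq⟩ := ih (by omega)
      set i : Fin (d + 1) := ⟨k + 1, by omega⟩ with hi
      have hTi : T i = S i := hcard2 i (by simp [hi])
      have hTicard : (T i).card = s := by rw [hTi, hcardS]
      obtain ⟨Q, hQsub, hQcard, hstep⟩ := exists_shrink H T i hTicard hms
      refine ⟨Function.update T i (T i \ Q), ?_, ?_, ?_, ?_, ?_⟩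
      · intro j
        rcases eq_or_ne j i with rfl | hj
        · rw [Function.update_self]
          exact Finset.sdiff_subset.trans (hTsub _)
        · rw [Function.update_of_ne hj]; exact hTsub j
      · have h0i : (0 : Fin (d + 1)) ≠ i := by
          intro h
          have := congrArg Fin.val h
          simp [hi] at this
        rw [Function.update_of_ne h0i, hT0]
      · intro j h1 h2
        rcases eq_or_ne j i with rfl | hj
        · rw [Function.update_self, Finset.card_sdiff_of_subset hQsub, hTicard, hQcard]
        · rw [Function.update_of_ne hj]
          have hjne : (j : ℕ) ≠ k + 1 := by
            intro h
            exact hj (Fin.ext (by simp [hi, h]))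
          exact hcard1 j h1 (by omega)
      · intro j hj
        have hj' : j ≠ i := by
          intro h
          have hv : (j : ℕ) = k + 1 := by rw [h, hi]
          omega
        rw [Function.update_of_ne hj']
        exact hcard2 j (by omega)
      · calc b * (s - m) ^ (k + 1) = b * (s - m) ^ k * (s - m) := by ring
          _ ≤ edgeCount H T * s ^ k * (s - m) := Nat.mul_le_mul_right _ hineq
          _ = edgeCount H T * (s - m) * s ^ k := by ring
          _ ≤ edgeCount H (Function.update T i (T i \ Q)) * s * s ^ k :=
              Nat.mul_le_mul_right _ hstep
          _ = edgeCount H (Function.update T i (T i \ Q)) * s ^ (k + 1) := by ring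
  obtain ⟨T, hTsub, hT0, hcard1, _, hineq⟩ := main d le_rfl
  have hcardT : ∀ j, (T j).card = s - m := by
    intro j
    rcases eq_or_ne j 0 with rfl | hj
    · rw [hT0, Finset.card_sdiff_of_subset hQ₁, hcardS, hQ₁card]
    · have h0 : (j : ℕ) ≠ 0 := by
        intro h; exact hj (Fin.ext (by simp [h]))
      exact hcard1 j (by omega) (by omega)
  have hmaxT := hmax (s - m) T (fun j => (hTsub j).trans (hS j)) hcardT
  set α : ℝ := (d : ℝ) + 1 - ε ^ (2 * d) with hα
  have hsmR : (0 : ℝ) < ((s - m : ℕ) : ℝ) := by rw [hsm]; positivity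
  have hpα : (0 : ℝ) < (s : ℝ) ^ α := Real.rpow_pos_of_pos hsR α
  have h1 : (edgeCount H T : ℝ) ≤ (edgeCount H S : ℝ) * (1 - ε) ^ α := by
    rw [div_le_div_iff₀ (Real.rpow_pos_of_pos hsmR α) hpα] at hmaxT
    rw [hsm, Real.mul_rpow hr.le hsR.le] at hmaxT
    have : (edgeCount H T : ℝ) * (s : ℝ) ^ α ≤
        (edgeCount H S : ℝ) * (1 - ε) ^ α * (s : ℝ) ^ α := by
      calc (edgeCount H T : ℝ) * (s : ℝ) ^ α ≤
          (edgeCount H S : ℝ) * ((1 - ε) ^ α * (s : ℝ) ^ α) := hmaxT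
        _ = (edgeCount H S : ℝ) * (1 - ε) ^ α * (s : ℝ) ^ α := by ring
    exact le_of_mul_le_mul_right this hpα
  have h2 : (b : ℝ) * (1 - ε) ^ (d : ℕ) ≤ (edgeCount H T : ℝ) := by
    have hc : (b : ℝ) * ((s - m : ℕ) : ℝ) ^ (d : ℕ) ≤
        (edgeCount H T : ℝ) * (s : ℝ) ^ (d : ℕ) := by exact_mod_cast hineq
    rw [hsm, mul_pow] at hc
    have hpd : (0 : ℝ) < (s : ℝ) ^ (d : ℕ) := by positivity
    have : (b : ℝ) * (1 - ε) ^ (d : ℕ) * (s : ℝ) ^ (d : ℕ) ≤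
        (edgeCount H T : ℝ) * (s : ℝ) ^ (d : ℕ) := by
      calc (b : ℝ) * (1 - ε) ^ (d : ℕ) * (s : ℝ) ^ (d : ℕ) =
          (b : ℝ) * ((1 - ε) ^ (d : ℕ) * (s : ℝ) ^ (d : ℕ)) := by ring
        _ ≤ _ := hc
    exact le_of_mul_le_mul_right this hpd
  have h3 : (b : ℝ) * (1 - ε) ^ ((d : ℕ) : ℝ) ≤ (edgeCount H S : ℝ) * (1 - ε) ^ α := by
    rw [Real.rpow_natCast]
    exact h2.trans h1
  have hkey : (edgeCount H S : ℝ) * (1 - ε) ^ ((1 : ℝ) - ε ^ (2 * d)) =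
      (edgeCount H S : ℝ) * (1 - ε) ^ α / (1 - ε) ^ ((d : ℕ) : ℝ) := by
    rw [mul_div_assoc, ← Real.rpow_sub hr]
    congr 2
    rw [hα]
    push_cast
    ring
  rw [hkey, le_div_iff₀ (Real.rpow_pos_of_pos hr _)]
  exact h3
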